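/- Let a ≥ 1, 0 < γ < 1, and let Θ_a denote the Hilbert projective metric on the cone C_a. Then for every f ∈ C_{γa} (i.e. f > 0 and var(f) ≤ γ·a·ess inf(f)) with ess inf(f) > 0, one has Θ_a(f, 1) ≤ log((1 + γ(a+1))/(1-γ)). Consequently the diameter of C_{γa} inside C_a with respect to Θ_a is at most 2·log((1 + γ(a+1))/(1-γ)) < ∞. -/

import Mathlib

open MeasureTheory

noncomputable def var (f : ℝ → ℝ) (s : Set ℝ) : ℝ := (eVariationOn f s).toReal
noncomputable def einf (f : ℝ → ℝ) (s : Set ℝ) : ℝ := essInf f (volume.restrict s)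
noncomputable def supNorm (f : ℝ → ℝ) (s : Set ℝ) : ℝ :=
  essSup (fun x => |f x|) (volume.restrict s)

/-- The cone `C_a = { f ∈ BV : f > 0 (a.e.), var f ≤ a · essinf f }`. -/
def memC (a : ℝ) (I : Set ℝ) (f : ℝ → ℝ) : Prop :=
  BoundedVariationOn f I ∧ (∀ᵐ x ∂(volume.restrict I), 0 < f x) ∧ var f I ≤ a * einf f I

/-- The partial order induced by the cone: `f ⪯_a g` iff `g - f ∈ C_a ∪ {0}`. -/
def leC (a : ℝ) (I : Set ℝ) (f g : ℝ → ℝ) : Prop :=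
  memC a I (fun x => g x - f x) ∨ (fun x => g x - f x) = 0

/-- `τ(f,h) = sup { λ > 0 : λ·f ⪯_a h }`. -/
noncomputable def tauC (a : ℝ) (I : Set ℝ) (f h : ℝ → ℝ) : ℝ :=
  sSup {l : ℝ | 0 < l ∧ leC a I (fun x => l * f x) h}

/-- `ρ(f,h) = inf { μ > 0 : h ⪯_a μ·f }`. -/
noncomputable def rhoC (a : ℝ) (I : Set ℝ) (f h : ℝ → ℝ) : ℝ :=
  sInf {u : ℝ | 0 < u ∧ leC a I h (fun x => u * f x)}

/-- The Hilbert projective (pseudo-)metric `Θ_a(f,h) = log (ρ(f,h)/τ(f,h))`. -/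
noncomputable def ThetaC (a : ℝ) (I : Set ℝ) (f h : ℝ → ℝ) : ℝ :=
  Real.log (rhoC a I f h / tauC a I f h)

open Filter

section Helpers

variable {A B : ℝ}

lemma meas_ne_zero (hAB : A < B) : volume.restrict (Set.Icc A B) ≠ 0 := by
  intro h
  have h2 : volume.restrict (Set.Icc A B) Set.univ = 0 := by rw [h]; simp
  rw [Measure.restrict_apply_univ, Real.volume_Icc, ENNReal.ofReal_eq_zero] at h2
  linarith

lemma aeNB (hAB : A < B) : (ae (volume.restrict (Set.Icc A B))).NeBot :=
  ae_neBot.mpr (meas_ne_zero hAB)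

lemma bv_pt_bounds (hAB : A < B) {f : ℝ → ℝ} (hf : BoundedVariationOn f (Set.Icc A B)) :
    ∀ x ∈ Set.Icc A B, f A - var f (Set.Icc A B) ≤ f x ∧ f x ≤ f A + var f (Set.Icc A B) := by
  intro x hx
  have hA : A ∈ Set.Icc A B := Set.left_mem_Icc.mpr hAB.le
  have := hf.dist_le hx hA
  rw [Real.dist_eq] at this
  have h1 := abs_le.mp this
  simp only [var]
  constructor <;> [linarith [h1.1]; linarith [h1.2]]

lemma bddA (hAB : A < B) {f : ℝ → ℝ} (hf : BoundedVariationOn f (Set.Icc A B)) :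
    IsBoundedUnder (· ≤ ·) (ae (volume.restrict (Set.Icc A B))) f := by
  refine ⟨f A + var f (Set.Icc A B), eventually_map.mpr ?_⟩
  filter_upwards [ae_restrict_mem measurableSet_Icc] with x hx
  exact (bv_pt_bounds hAB hf x hx).2

lemma bddG (hAB : A < B) {f : ℝ → ℝ} (hf : BoundedVariationOn f (Set.Icc A B)) :
    IsBoundedUnder (· ≥ ·) (ae (volume.restrict (Set.Icc A B))) f := by
  refine ⟨f A - var f (Set.Icc A B), eventually_map.mpr ?_⟩
  filter_upwards [ae_restrict_mem measurableSet_Icc] with x hx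
  exact (bv_pt_bounds hAB hf x hx).1

lemma ae_le_S (hAB : A < B) {f : ℝ → ℝ} (hf : BoundedVariationOn f (Set.Icc A B)) :
    ∀ᵐ x ∂(volume.restrict (Set.Icc A B)), f x ≤ essSup f (volume.restrict (Set.Icc A B)) :=
  ae_le_essSup (bddA hAB hf)

lemma ae_einf_le (hAB : A < B) {f : ℝ → ℝ} (hf : BoundedVariationOn f (Set.Icc A B)) :
    ∀ᵐ x ∂(volume.restrict (Set.Icc A B)), essInf f (volume.restrict (Set.Icc A B)) ≤ f x :=
  ae_essInf_le (bddG hAB hf)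

lemma le_einf' (hAB : A < B) {f : ℝ → ℝ} {c : ℝ} (hf : BoundedVariationOn f (Set.Icc A B))
    (h : ∀ᵐ x ∂(volume.restrict (Set.Icc A B)), c ≤ f x) :
    c ≤ essInf f (volume.restrict (Set.Icc A B)) := by
  have := aeNB hAB
  exact Filter.le_liminf_of_le ((bddA hAB hf).isCoboundedUnder_ge) h

lemma essSup_le' (hAB : A < B) {f : ℝ → ℝ} {c : ℝ} (hf : BoundedVariationOn f (Set.Icc A B))
    (h : ∀ᵐ x ∂(volume.restrict (Set.Icc A B)), f x ≤ c) :
    essSup f (volume.restrict (Set.Icc A B)) ≤ c := by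
  have := aeNB hAB
  exact Filter.limsup_le_of_le ((bddG hAB hf).isCoboundedUnder_le) h

lemma S_le_e_add_var (hAB : A < B) {f : ℝ → ℝ} (hf : BoundedVariationOn f (Set.Icc A B)) :
    essSup f (volume.restrict (Set.Icc A B)) ≤
      einf f (Set.Icc A B) + var f (Set.Icc A B) := by
  have key : ∀ y ∈ Set.Icc A B,
      essSup f (volume.restrict (Set.Icc A B)) ≤ f y + var f (Set.Icc A B) := by
    intro y hy
    apply essSup_le' hAB hf
    filter_upwards [ae_restrict_mem measurableSet_Icc] with x hx
    have := hf.dist_le hx hy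
    rw [Real.dist_eq] at this
    have := (abs_le.mp this).2
    simp only [var]
    linarith
  have : essSup f (volume.restrict (Set.Icc A B)) - var f (Set.Icc A B) ≤
      einf f (Set.Icc A B) := by
    apply le_einf' hAB hf
    filter_upwards [ae_restrict_mem measurableSet_Icc] with x hx
    linarith [key x hx]
  linarith

lemma evar_comb (f h : ℝ → ℝ) (s : Set ℝ) (b c : ℝ) :
    eVariationOn (fun x => b * h x + c * f x) s ≤
      ENNReal.ofReal |b| * eVariationOn h s + ENNReal.ofReal |c| * eVariationOn f s := by
  apply iSup_le
  rintro ⟨n, u, hu, us⟩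
  have step : ∀ i : ℕ,
      edist ((fun x => b * h x + c * f x) (u (i+1))) ((fun x => b * h x + c * f x) (u i)) ≤
        ENNReal.ofReal |b| * edist (h (u (i+1))) (h (u i)) +
        ENNReal.ofReal |c| * edist (f (u (i+1))) (f (u i)) := by
    intro i
    simp only [edist_dist, Real.dist_eq]
    rw [← ENNReal.ofReal_mul (abs_nonneg b), ← ENNReal.ofReal_mul (abs_nonneg c),
      ← ENNReal.ofReal_add (by positivity) (by positivity)]
    apply ENNReal.ofReal_le_ofReal
    rw [← abs_mul, ← abs_mul]
    calc |b * h (u (i+1)) + c * f (u (i+1)) - (b * h (u i) + c * f (u i))|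
        = |b * (h (u (i+1)) - h (u i)) + c * (f (u (i+1)) - f (u i))| := by ring_nf
      _ ≤ |b * (h (u (i+1)) - h (u i))| + |c * (f (u (i+1)) - f (u i))| := abs_add_le _ _
  calc ∑ i ∈ Finset.range n,
        edist ((fun x => b * h x + c * f x) (u (i+1))) ((fun x => b * h x + c * f x) (u i))
      ≤ ∑ i ∈ Finset.range n,
        (ENNReal.ofReal |b| * edist (h (u (i+1))) (h (u i)) +
         ENNReal.ofReal |c| * edist (f (u (i+1))) (f (u i))) :=
        Finset.sum_le_sum fun i _ => step i
    _ = ENNReal.ofReal |b| * ∑ i ∈ Finset.range n, edist (h (u (i+1))) (h (u i)) +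
        ENNReal.ofReal |c| * ∑ i ∈ Finset.range n, edist (f (u (i+1))) (f (u i)) := by
        rw [Finset.sum_add_distrib, Finset.mul_sum, Finset.mul_sum]
    _ ≤ ENNReal.ofReal |b| * eVariationOn h s + ENNReal.ofReal |c| * eVariationOn f s := by
        gcongr
        · exact eVariationOn.sum_le (f := h) (n := n) hu us
        · exact eVariationOn.sum_le (f := f) (n := n) hu us

lemma var_comb {f h : ℝ → ℝ} {s : Set ℝ} (b c : ℝ)
    (hf : BoundedVariationOn f s) (hh : BoundedVariationOn h s) :
    BoundedVariationOn (fun x => b * h x + c * f x) s ∧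
      var (fun x => b * h x + c * f x) s ≤ |b| * var h s + |c| * var f s := by
  have hle := evar_comb f h s b c
  have hfin : ENNReal.ofReal |b| * eVariationOn h s + ENNReal.ofReal |c| * eVariationOn f s ≠ ⊤ := by
    apply ENNReal.add_ne_top.mpr
    constructor <;> exact ENNReal.mul_ne_top ENNReal.ofReal_ne_top ‹_›
  refine ⟨(lt_of_le_of_lt hle hfin.lt_top).ne, ?_⟩
  have := ENNReal.toReal_mono hfin hle
  rw [ENNReal.toReal_add (ENNReal.mul_ne_top ENNReal.ofReal_ne_top hh)
    (ENNReal.mul_ne_top ENNReal.ofReal_ne_top hf), ENNReal.toReal_mul, ENNReal.toReal_mul,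
    ENNReal.toReal_ofReal (abs_nonneg b), ENNReal.toReal_ofReal (abs_nonneg c)] at this
  exact this

lemma core (hAB : A < B) {a c1 c2 : ℝ} {g1 g2 : ℝ → ℝ} (ha : 0 < a)
    (h1 : BoundedVariationOn g1 (Set.Icc A B)) (h2 : BoundedVariationOn g2 (Set.Icc A B))
    (hc1 : 0 < c1) (hc2 : 0 < c2)
    (hpos : 0 < c1 * einf g1 (Set.Icc A B)
        - c2 * essSup g2 (volume.restrict (Set.Icc A B)))
    (hvar : c1 * var g1 (Set.Icc A B) + c2 * var g2 (Set.Icc A B) ≤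
        a * (c1 * einf g1 (Set.Icc A B) - c2 * essSup g2 (volume.restrict (Set.Icc A B))))
    (F : ℝ → ℝ) (hF : ∀ x, F x = c1 * g1 x - c2 * g2 x) :
    memC a (Set.Icc A B) F := by
  have hI : einf g1 (Set.Icc A B) = essInf g1 (volume.restrict (Set.Icc A B)) := rfl
  have hFe : F = fun x => c1 * g1 x + (-c2) * g2 x := by
    funext x; rw [hF x]; ring
  obtain ⟨hBV, hv⟩ := var_comb (f := g2) (h := g1) c1 (-c2) h2 h1
  rw [← hFe] at hBV hv
  rw [abs_of_pos hc1, abs_neg, abs_of_pos hc2] at hv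
  have haeb : ∀ᵐ x ∂(volume.restrict (Set.Icc A B)),
      c1 * einf g1 (Set.Icc A B) - c2 * essSup g2 (volume.restrict (Set.Icc A B)) ≤ F x := by
    filter_upwards [ae_einf_le hAB h1, ae_le_S hAB h2] with x hx1 hx2
    rw [hF x, hI] at *
    have b1 := mul_le_mul_of_nonneg_left hx1 hc1.le
    have b2 := mul_le_mul_of_nonneg_left hx2 hc2.le
    linarith
  have heinf : c1 * einf g1 (Set.Icc A B) - c2 * essSup g2 (volume.restrict (Set.Icc A B))
      ≤ einf F (Set.Icc A B) := le_einf' hAB hBV haeb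
  refine ⟨hBV, ?_, ?_⟩
  · filter_upwards [haeb] with x hx; linarith
  · have : a * (c1 * einf g1 (Set.Icc A B) - c2 * essSup g2 (volume.restrict (Set.Icc A B)))
        ≤ a * einf F (Set.Icc A B) :=
      mul_le_mul_of_nonneg_left heinf ha.le
    linarith

lemma bv_const (c : ℝ) (s : Set ℝ) : BoundedVariationOn (fun _ : ℝ => c) s := by
  unfold BoundedVariationOn
  rw [eVariationOn.constant_on]
  · exact ENNReal.zero_ne_top
  · rintro x ⟨p, _, rfl⟩ y ⟨q, _, rfl⟩; rfl

lemma var_const (c : ℝ) (s : Set ℝ) : var (fun _ : ℝ => c) s = 0 := by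
  unfold var
  rw [eVariationOn.constant_on]
  · rfl
  · rintro x ⟨p, _, rfl⟩ y ⟨q, _, rfl⟩; rfl

lemma var_nonneg (f : ℝ → ℝ) (s : Set ℝ) : 0 ≤ var f s := ENNReal.toReal_nonneg

lemma leC_ae (hAB : A < B) {a : ℝ} {g1 g2 : ℝ → ℝ} (h : leC a (Set.Icc A B) g1 g2) :
    ∀ᵐ x ∂(volume.restrict (Set.Icc A B)), g1 x ≤ g2 x := by
  rcases h with h | h
  · filter_upwards [h.2.1] with x hx; linarith
  · apply Eventually.of_forall
    intro x
    have := congrFun h x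
    simp only [Pi.zero_apply] at this
    linarith [this.le, this.ge]

lemma tau_bdd (hAB : A < B) {a : ℝ} {f h : ℝ → ℝ}
    (hfBV : BoundedVariationOn f (Set.Icc A B)) (hhBV : BoundedVariationOn h (Set.Icc A B))
    (hef : 0 < einf f (Set.Icc A B)) :
    BddAbove {l : ℝ | 0 < l ∧ leC a (Set.Icc A B) (fun x => l * f x) h} := by
  refine ⟨essSup h (volume.restrict (Set.Icc A B)) / einf f (Set.Icc A B), ?_⟩
  rintro l ⟨hl, hle⟩
  have := aeNB hAB
  obtain ⟨x, h1x, h2x, h3x⟩ :=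
    ((leC_ae hAB hle).and ((ae_le_S hAB hhBV).and (ae_einf_le hAB hfBV))).exists
  rw [le_div_iff₀ hef]
  have : l * einf f (Set.Icc A B) ≤ l * f x :=
    mul_le_mul_of_nonneg_left h3x hl.le
  calc l * einf f (Set.Icc A B) ≤ l * f x := this
    _ ≤ h x := h1x
    _ ≤ essSup h (volume.restrict (Set.Icc A B)) := h2x

lemma theta_le (hAB : A < B) {a K : ℝ} {f h : ℝ → ℝ} {lam u : ℝ}
    (hfBV : BoundedVariationOn f (Set.Icc A B)) (hhBV : BoundedVariationOn h (Set.Icc A B))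
    (hef : 0 < einf f (Set.Icc A B))
    (hlam : lam ∈ {l : ℝ | 0 < l ∧ leC a (Set.Icc A B) (fun x => l * f x) h})
    (hu : u ∈ {u : ℝ | 0 < u ∧ leC a (Set.Icc A B) h (fun x => u * f x)})
    (hK : u / lam ≤ K) (hK1 : 1 ≤ K) :
    ThetaC a (Set.Icc A B) f h ≤ Real.log K := by
  have hbddA := tau_bdd (a := a) hAB hfBV hhBV hef
  have hτ : lam ≤ tauC a (Set.Icc A B) f h := le_csSup hbddA hlam
  have hτ0 : 0 < tauC a (Set.Icc A B) f h := lt_of_lt_of_le hlam.1 hτ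
  have hbb : BddBelow {u : ℝ | 0 < u ∧ leC a (Set.Icc A B) h (fun x => u * f x)} :=
    ⟨0, fun v hv => hv.1.le⟩
  have hρu : rhoC a (Set.Icc A B) f h ≤ u := csInf_le hbb hu
  have hρ0 : 0 ≤ rhoC a (Set.Icc A B) f h :=
    le_csInf ⟨u, hu⟩ fun v hv => hv.1.le
  have hdiv : rhoC a (Set.Icc A B) f h / tauC a (Set.Icc A B) f h ≤ K :=
    le_trans (div_le_div₀ (le_trans hρ0 hρu) hρu hlam.1 hτ) hK
  have hdiv0 : 0 ≤ rhoC a (Set.Icc A B) f h / tauC a (Set.Icc A B) f h :=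
    div_nonneg hρ0 hτ0.le
  unfold ThetaC
  rcases hdiv0.eq_or_lt with h0 | h0
  · rw [← h0, Real.log_zero]
    exact Real.log_nonneg hK1
  · exact Real.log_le_log h0 hdiv

end Helpers

set_option maxHeartbeats 2000000 in
theorem stmt7 (A B : ℝ) (hAB : A < B) (a γ : ℝ) (ha : 1 ≤ a) (hγ0 : 0 < γ) (hγ1 : γ < 1) :
    (∀ f : ℝ → ℝ, memC (γ * a) (Set.Icc A B) f → 0 < einf f (Set.Icc A B) →
      {l : ℝ | 0 < l ∧ leC a (Set.Icc A B) (fun x => l * (fun _ : ℝ => (1:ℝ)) x) f}.Nonempty ∧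
      BddAbove {l : ℝ | 0 < l ∧ leC a (Set.Icc A B) (fun x => l * (fun _ : ℝ => (1:ℝ)) x) f} ∧
      {u : ℝ | 0 < u ∧ leC a (Set.Icc A B) f (fun x => u * (fun _ : ℝ => (1:ℝ)) x)}.Nonempty ∧
      ThetaC a (Set.Icc A B) (fun _ => (1:ℝ)) f
        ≤ Real.log ((1 + γ * (a + 1)) / (1 - γ))) ∧
    (∀ f h : ℝ → ℝ, memC (γ * a) (Set.Icc A B) f → memC (γ * a) (Set.Icc A B) h →
      0 < einf f (Set.Icc A B) → 0 < einf h (Set.Icc A B) →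
      ThetaC a (Set.Icc A B) f h ≤ 2 * Real.log ((1 + γ * (a + 1)) / (1 - γ))) := by
  have ha0 : 0 < a := lt_of_lt_of_le one_pos ha
  have hγ1' : 0 < 1 - γ := by linarith
  have hκ : 0 < 1 + γ * (a + 1) := by nlinarith
  have hK1 : (1:ℝ) ≤ (1 + γ * (a + 1)) / (1 - γ) := by
    rw [le_div_iff₀ hγ1']
    nlinarith
  haveI : NeZero (volume.restrict (Set.Icc A B)) := ⟨meas_ne_zero hAB⟩
  have hone : einf (fun _ : ℝ => (1:ℝ)) (Set.Icc A B) = 1 := essInf_const' _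
  have honeS : essSup (fun _ : ℝ => (1:ℝ)) (volume.restrict (Set.Icc A B)) = 1 := essSup_const' _
  have key_tau : ∀ f h : ℝ → ℝ, memC (γ * a) (Set.Icc A B) f → memC (γ * a) (Set.Icc A B) h →
      0 < einf f (Set.Icc A B) → 0 < einf h (Set.Icc A B) →
      ((1 - γ) * einf h (Set.Icc A B) / ((1 + γ * (a + 1)) * einf f (Set.Icc A B))) ∈
        {l : ℝ | 0 < l ∧ leC a (Set.Icc A B) (fun x => l * f x) h} := by
    intro f h hf hh hef heh
    have hlam0 : 0 < (1 - γ) * einf h (Set.Icc A B) /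
        ((1 + γ * (a + 1)) * einf f (Set.Icc A B)) :=
      div_pos (by nlinarith) (by nlinarith)
    set lam := (1 - γ) * einf h (Set.Icc A B) /
        ((1 + γ * (a + 1)) * einf f (Set.Icc A B)) with hlam_def
    have hlam_eq : lam * ((1 + γ * (a + 1)) * einf f (Set.Icc A B)) =
        (1 - γ) * einf h (Set.Icc A B) := by
      rw [hlam_def]; field_simp
    have hSf : essSup f (volume.restrict (Set.Icc A B)) ≤
        (1 + γ * a) * einf f (Set.Icc A B) := by
      have h1 := S_le_e_add_var hAB hf.1
      have h2 := hf.2.2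
      nlinarith
    have hVf : var f (Set.Icc A B) ≤ γ * a * einf f (Set.Icc A B) := hf.2.2
    have hVh : var h (Set.Icc A B) ≤ γ * a * einf h (Set.Icc A B) := hh.2.2
    have e2 : lam * essSup f (volume.restrict (Set.Icc A B)) ≤
        lam * ((1 + γ * a) * einf f (Set.Icc A B)) :=
      mul_le_mul_of_nonneg_left hSf hlam0.le
    have e3 : lam * (γ * a * einf f (Set.Icc A B)) +
        a * (lam * ((1 + γ * a) * einf f (Set.Icc A B))) =
        a * (1 - γ) * einf h (Set.Icc A B) := by
      linear_combination a * hlam_eq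
    have hpos : 0 < 1 * einf h (Set.Icc A B) -
        lam * essSup f (volume.restrict (Set.Icc A B)) := by
      have e4 : lam * ((1 + γ * a) * einf f (Set.Icc A B)) * (1 + γ * (a + 1)) =
          (1 - γ) * (1 + γ * a) * einf h (Set.Icc A B) := by
        linear_combination (1 + γ * a) * hlam_eq
      nlinarith [e2, e4, heh, hκ, mul_pos hγ0 heh,
        mul_pos (mul_pos hγ0 hγ0) (mul_pos ha0 heh)]
    have hvar : 1 * var h (Set.Icc A B) + lam * var f (Set.Icc A B) ≤
        a * (1 * einf h (Set.Icc A B) -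
          lam * essSup f (volume.restrict (Set.Icc A B))) := by
      have e1 : lam * var f (Set.Icc A B) ≤ lam * (γ * a * einf f (Set.Icc A B)) :=
        mul_le_mul_of_nonneg_left hVf hlam0.le
      have e5 : a * (lam * essSup f (volume.restrict (Set.Icc A B))) ≤
          a * (lam * ((1 + γ * a) * einf f (Set.Icc A B))) :=
        mul_le_mul_of_nonneg_left e2 ha0.le
      nlinarith [e1, e3, e5, hVh]
    exact ⟨hlam0, Or.inl
      (core hAB ha0 hh.1 hf.1 one_pos hlam0 hpos hvar _ (fun x => by ring))⟩
  have key_rho : ∀ f h : ℝ → ℝ, memC (γ * a) (Set.Icc A B) f → memC (γ * a) (Set.Icc A B) h →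
      0 < einf f (Set.Icc A B) → 0 < einf h (Set.Icc A B) →
      ((1 + γ * (a + 1)) * einf h (Set.Icc A B) / ((1 - γ) * einf f (Set.Icc A B))) ∈
        {u : ℝ | 0 < u ∧ leC a (Set.Icc A B) h (fun x => u * f x)} := by
    intro f h hf hh hef heh
    have hu10 : 0 < (1 + γ * (a + 1)) * einf h (Set.Icc A B) /
        ((1 - γ) * einf f (Set.Icc A B)) :=
      div_pos (by nlinarith) (by nlinarith)
    set u1 := (1 + γ * (a + 1)) * einf h (Set.Icc A B) /
        ((1 - γ) * einf f (Set.Icc A B)) with hu1_def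
    have hu1_eq : u1 * ((1 - γ) * einf f (Set.Icc A B)) =
        (1 + γ * (a + 1)) * einf h (Set.Icc A B) := by
      rw [hu1_def]; field_simp
    have hSh : essSup h (volume.restrict (Set.Icc A B)) ≤
        (1 + γ * a) * einf h (Set.Icc A B) := by
      have h1 := S_le_e_add_var hAB hh.1
      have h2 := hh.2.2
      nlinarith
    have hVf : var f (Set.Icc A B) ≤ γ * a * einf f (Set.Icc A B) := hf.2.2
    have hVh : var h (Set.Icc A B) ≤ γ * a * einf h (Set.Icc A B) := hh.2.2
    have hpos : 0 < u1 * einf f (Set.Icc A B) -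
        1 * essSup h (volume.restrict (Set.Icc A B)) := by
      nlinarith [hSh, hu1_eq, hγ1', mul_pos hγ0 heh,
        mul_pos (mul_pos hγ0 hγ0) (mul_pos ha0 heh)]
    have hvar : u1 * var f (Set.Icc A B) + 1 * var h (Set.Icc A B) ≤
        a * (u1 * einf f (Set.Icc A B) -
          1 * essSup h (volume.restrict (Set.Icc A B))) := by
      have e1 : u1 * var f (Set.Icc A B) ≤ u1 * (γ * a * einf f (Set.Icc A B)) :=
        mul_le_mul_of_nonneg_left hVf hu10.le
      have e5 : a * essSup h (volume.restrict (Set.Icc A B)) ≤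
          a * ((1 + γ * a) * einf h (Set.Icc A B)) :=
        mul_le_mul_of_nonneg_left hSh ha0.le
      have e3 : u1 * (γ * a * einf f (Set.Icc A B)) + γ * a * einf h (Set.Icc A B) +
          a * ((1 + γ * a) * einf h (Set.Icc A B)) = a * (u1 * einf f (Set.Icc A B)) := by
        linear_combination (-a) * hu1_eq
      nlinarith [e1, e5, hVh, e3]
    exact ⟨hu10, Or.inl
      (core hAB ha0 hf.1 hh.1 hu10 one_pos hpos hvar _ (fun x => by ring))⟩
  constructor
  · -- Part 1
    intro f hf hef
    have hBV := hf.1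
    have heone : (0:ℝ) < einf (fun _ : ℝ => (1:ℝ)) (Set.Icc A B) := by
      rw [show einf (fun _ : ℝ => (1:ℝ)) (Set.Icc A B) = 1 from hone]; exact one_pos
    have hVf : var f (Set.Icc A B) ≤ γ * a * einf f (Set.Icc A B) := hf.2.2
    have hmem_l : ((1 - γ) * einf f (Set.Icc A B)) ∈
        {l : ℝ | 0 < l ∧ leC a (Set.Icc A B) (fun x => l * (fun _ : ℝ => (1:ℝ)) x) f} := by
      have hl0 : 0 < (1 - γ) * einf f (Set.Icc A B) := by nlinarith
      refine ⟨hl0, Or.inl ?_⟩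
      refine core hAB ha0 hBV (bv_const 1 _) one_pos hl0 ?_ ?_ _ (fun x => by ring)
      · rw [honeS]; nlinarith [hef, mul_pos hγ0 hef]
      · rw [honeS, var_const]; nlinarith [hef]
    have hSf : essSup f (volume.restrict (Set.Icc A B)) ≤
        (1 + γ * a) * einf f (Set.Icc A B) := by
      have h1 := S_le_e_add_var hAB hBV
      nlinarith
    have hmem_u : ((1 + γ * (a + 1)) * einf f (Set.Icc A B)) ∈
        {u : ℝ | 0 < u ∧ leC a (Set.Icc A B) f (fun x => u * (fun _ : ℝ => (1:ℝ)) x)} := by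
      have hu0 : 0 < (1 + γ * (a + 1)) * einf f (Set.Icc A B) := by nlinarith
      refine ⟨hu0, Or.inl ?_⟩
      refine core hAB ha0 (bv_const 1 _) hBV hu0 one_pos ?_ ?_ _ (fun x => by ring)
      · rw [show einf (fun _ : ℝ => (1:ℝ)) (Set.Icc A B) = 1 from hone]
        nlinarith [hSf, mul_pos hγ0 hef]
      · rw [show einf (fun _ : ℝ => (1:ℝ)) (Set.Icc A B) = 1 from hone, var_const]
        nlinarith [hSf, mul_pos hγ0 hef]
    refine ⟨⟨_, hmem_l⟩, tau_bdd hAB (bv_const 1 _) hBV heone, ⟨_, hmem_u⟩, ?_⟩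
    apply theta_le hAB (bv_const 1 _) hBV heone hmem_l hmem_u ?_ hK1
    have heq : (1 + γ * (a + 1)) * einf f (Set.Icc A B) /
        ((1 - γ) * einf f (Set.Icc A B)) = (1 + γ * (a + 1)) / (1 - γ) :=
      mul_div_mul_right _ _ hef.ne'
    exact heq.le
  · -- Part 2
    intro f h hf hh hef heh
    have h2log : 2 * Real.log ((1 + γ * (a + 1)) / (1 - γ)) =
        Real.log (((1 + γ * (a + 1)) / (1 - γ)) ^ 2) := by
      rw [Real.log_pow]; push_cast; ring
    rw [h2log]
    apply theta_le hAB hf.1 hh.1 hef (key_tau f h hf hh hef heh) (key_rho f h hf hh hef heh)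
    · have heq : ((1 + γ * (a + 1)) * einf h (Set.Icc A B) /
          ((1 - γ) * einf f (Set.Icc A B))) /
          ((1 - γ) * einf h (Set.Icc A B) /
          ((1 + γ * (a + 1)) * einf f (Set.Icc A B))) =
          ((1 + γ * (a + 1)) / (1 - γ)) ^ 2 := by
        field_simp
      exact heq.le
    · nlinarith [hK1]
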